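/- Classical Crofton formula in ℝⁿ: for x, y ∈ ℝⁿ, the Euclidean distance |x−y| equals a fixed positive constant times the measure, with respect to the rigid-motion-invariant measure on the space of affine hyperplanes, of the set of hyperplanes meeting the segment [x,y]. -/

import Mathlib

open MeasureTheory Metric
open scoped ENNReal

section CroftonAux

open scoped RealInnerProductSpace

variable {n : ℕ}

private lemma crofton_exists_iso (a b : EuclideanSpace ℝ (Fin n)) (h : ‖a‖ = ‖b‖) :
    ∃ g : EuclideanSpace ℝ (Fin n) ≃ₗᵢ[ℝ] EuclideanSpace ℝ (Fin n), g a = b :=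
  ⟨Submodule.reflection (ℝ ∙ (a - b))ᗮ, Submodule.reflection_sub h⟩

end CroftonAux

open scoped RealInnerProductSpace in
theorem euclidean_crofton_formula (n : ℕ) (hn : 1 ≤ n)
    (σ : Measure (EuclideanSpace ℝ (Fin n)))
    (hinv : ∀ g : EuclideanSpace ℝ (Fin n) ≃ₗᵢ[ℝ] EuclideanSpace ℝ (Fin n),
      σ.map g = σ)
    (hsupp : σ (sphere (0 : EuclideanSpace ℝ (Fin n)) 1)ᶜ = 0)
    (hne : σ (sphere (0 : EuclideanSpace ℝ (Fin n)) 1) ≠ 0)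
    (hfin : σ (sphere (0 : EuclideanSpace ℝ (Fin n)) 1) ≠ ⊤) :
    ∃ k : ℝ, 0 < k ∧ ∀ x y : EuclideanSpace ℝ (Fin n),
      dist x y =
        k * ((σ.prod volume) {p : EuclideanSpace ℝ (Fin n) × ℝ |
          ‖p.1‖ = 1 ∧ ∃ z ∈ segment ℝ x y, inner ℝ z p.1 = p.2}).toReal := by
  classical
  set E := EuclideanSpace ℝ (Fin n) with hEdef
  -- a fixed unit vector
  set e : E := EuclideanSpace.single (⟨0, hn⟩ : Fin n) (1 : ℝ) with hedef
  have hnorme : ‖e‖ = 1 := by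
    rw [hedef, EuclideanSpace.norm_single]; exact norm_one
  have hmeas : ∀ v : E, Measurable fun u : E => ENNReal.ofReal |⟪v, u⟫| := by
    intro v
    exact ((continuous_const.inner continuous_id).abs.measurable).ennreal_ofReal
  -- σ is a finite measure
  have hσuniv : σ Set.univ = σ (sphere (0 : E) 1) := by
    have h := measure_add_measure_compl (μ := σ) (isClosed_sphere : IsClosed (sphere (0 : E) 1)).measurableSet
    rw [hsupp, add_zero] at h
    exact h.symm
  haveI : IsFiniteMeasure σ := ⟨by rw [hσuniv]; exact hfin.lt_top⟩
  have hsphae : ∀ᵐ u ∂σ, u ∈ sphere (0 : E) 1 := by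
    rw [ae_iff]
    exact hsupp
  set C : ℝ≥0∞ := ∫⁻ u, ENNReal.ofReal |⟪e, u⟫| ∂σ with hCdef
  have hCfin : C ≠ ⊤ := by
    have hle : C ≤ ∫⁻ _, 1 ∂σ := by
      refine lintegral_mono_ae ?_
      filter_upwards [hsphae] with u hu
      have hu1 : ‖u‖ = 1 := mem_sphere_zero_iff_norm.1 hu
      have : |⟪e, u⟫| ≤ 1 := by
        calc |⟪e, u⟫| ≤ ‖e‖ * ‖u‖ := abs_real_inner_le_norm e u
        _ = 1 := by rw [hnorme, hu1, one_mul]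
      calc ENNReal.ofReal |⟪e, u⟫| ≤ ENNReal.ofReal 1 := ENNReal.ofReal_le_ofReal this
      _ = 1 := ENNReal.ofReal_one
    refine ne_top_of_le_ne_top ?_ hle
    rw [lintegral_one, hσuniv]
    exact hfin
  have hC0 : C ≠ 0 := by
    intro h
    have h0 : ∀ᵐ u ∂σ, ENNReal.ofReal |⟪e, u⟫| = 0 :=
      (lintegral_eq_zero_iff (hmeas e)).1 h
    have h0' : σ {u : E | ⟪e, u⟫ ≠ 0} = 0 := by
      rw [← ae_iff]
      filter_upwards [h0] with u hu
      have : |⟪e, u⟫| ≤ 0 := ENNReal.ofReal_eq_zero.1 hu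
      exact abs_nonpos_iff.1 this
    have hnull : ∀ i : Fin n,
        σ {u : E | ⟪EuclideanSpace.single i (1 : ℝ), u⟫ ≠ 0} = 0 := by
      intro i
      obtain ⟨g, hg⟩ := crofton_exists_iso e (EuclideanSpace.single i (1 : ℝ))
        (by simp [hnorme, EuclideanSpace.norm_single])
      have hms : MeasurableSet {u : E | ⟪EuclideanSpace.single i (1 : ℝ), u⟫ ≠ 0} := by
        have : Continuous fun u : E => ⟪EuclideanSpace.single i (1 : ℝ), u⟫ :=
          continuous_const.inner continuous_id
        exact (this.measurable (measurableSet_singleton 0)).compl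
      have : σ {u : E | ⟪EuclideanSpace.single i (1 : ℝ), u⟫ ≠ 0}
          = σ {u : E | ⟪e, u⟫ ≠ 0} := by
        conv_lhs => rw [← hinv g]
        rw [Measure.map_apply g.continuous.measurable hms]
        congr 1
        ext u
        simp only [Set.mem_preimage, Set.mem_setOf_eq]
        rw [← hg]
        show ⟪g e, g u⟫ ≠ 0 ↔ ⟪e, u⟫ ≠ 0
        rw [g.inner_map_map]
      rw [this, h0']
    have hsub : sphere (0 : E) 1 ⊆
        ⋃ i : Fin n, {u : E | ⟪EuclideanSpace.single i (1 : ℝ), u⟫ ≠ 0} := by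
      intro u hu
      have hu1 : ‖u‖ = 1 := mem_sphere_zero_iff_norm.1 hu
      have hune : u ≠ 0 := by
        intro h; rw [h] at hu1; simp at hu1
      have : ∃ i : Fin n, u i ≠ 0 := by
        by_contra hc
        push_neg at hc
        exact hune (by ext i; simpa using hc i)
      obtain ⟨i, hi⟩ := this
      refine Set.mem_iUnion.2 ⟨i, ?_⟩
      simpa [EuclideanSpace.inner_single_left] using hi
    have : σ (sphere (0 : E) 1) = 0 :=
      measure_mono_null hsub (measure_iUnion_null hnull)
    exact hne this
  -- rotation invariance: the integral scales like the norm
  have hscale : ∀ v : E, ∫⁻ u, ENNReal.ofReal |⟪v, u⟫| ∂σ = ENNReal.ofReal ‖v‖ * C := by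
    intro v
    rcases eq_or_ne v 0 with rfl | hv
    · simp
    · set w : E := ‖v‖⁻¹ • v with hwdef
      have hw1 : ‖w‖ = 1 := by
        rw [hwdef, norm_smul, norm_inv, norm_norm, inv_mul_cancel₀ (norm_ne_zero_iff.2 hv)]
      obtain ⟨g, hg⟩ := crofton_exists_iso e w (by rw [hnorme, hw1])
      have hvw : v = ‖v‖ • w := by
        rw [hwdef, smul_smul, mul_inv_cancel₀ (norm_ne_zero_iff.2 hv), one_smul]
      calc ∫⁻ u, ENNReal.ofReal |⟪v, u⟫| ∂σ
          = ∫⁻ u, ENNReal.ofReal ‖v‖ * ENNReal.ofReal |⟪w, u⟫| ∂σ := by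
            refine lintegral_congr fun u => ?_
            rw [← ENNReal.ofReal_mul (norm_nonneg v)]
            congr 1
            conv_lhs => rw [hvw]
            rw [real_inner_smul_left, abs_mul, abs_of_nonneg (norm_nonneg v)]
        _ = ENNReal.ofReal ‖v‖ * ∫⁻ u, ENNReal.ofReal |⟪w, u⟫| ∂σ :=
            lintegral_const_mul _ (hmeas w)
        _ = ENNReal.ofReal ‖v‖ * C := by
            congr 1
            conv_lhs => rw [← hinv g]
            rw [lintegral_map (hmeas w) g.continuous.measurable]
            exact lintegral_congr fun u => by rw [← hg, g.inner_map_map]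
  refine ⟨C.toReal⁻¹, inv_pos.2 (ENNReal.toReal_pos hC0 hCfin), fun x y => ?_⟩
  have hcx : Continuous fun p : E × ℝ => ⟪x, p.1⟫ := continuous_const.inner continuous_fst
  have hcy : Continuous fun p : E × ℝ => ⟪y, p.1⟫ := continuous_const.inner continuous_fst
  -- identify the set with an explicit one
  have hset : {p : E × ℝ | ‖p.1‖ = 1 ∧ ∃ z ∈ segment ℝ x y, inner ℝ z p.1 = p.2}
      = {p : E × ℝ | ‖p.1‖ = 1 ∧ p.2 ∈ Set.uIcc (⟪x, p.1⟫) (⟪y, p.1⟫)} := by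
    ext p
    simp only [Set.mem_setOf_eq]
    refine and_congr_right fun _ => ?_
    have himg : (fun z : E => ⟪z, p.1⟫) '' segment ℝ x y
        = segment ℝ (⟪x, p.1⟫) (⟪y, p.1⟫) := by
      exact image_segment ℝ ((innerₗ E).flip p.1).toAffineMap x y
    constructor
    · rintro ⟨z, hz, hzt⟩
      rw [← segment_eq_uIcc, ← himg]
      exact ⟨z, hz, hzt⟩
    · intro ht
      rw [← segment_eq_uIcc, ← himg] at ht
      obtain ⟨z, hz, hzt⟩ := ht
      exact ⟨z, hz, hzt⟩
  have hmeasS : MeasurableSet {p : E × ℝ |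
      ‖p.1‖ = 1 ∧ p.2 ∈ Set.uIcc (⟪x, p.1⟫) (⟪y, p.1⟫)} := by
    have h1 : MeasurableSet {p : E × ℝ | ‖p.1‖ = 1} :=
      (continuous_norm.comp continuous_fst).measurable (measurableSet_singleton 1)
    have h2 : MeasurableSet {p : E × ℝ | p.2 ∈ Set.uIcc (⟪x, p.1⟫) (⟪y, p.1⟫)} := by
      have : {p : E × ℝ | p.2 ∈ Set.uIcc (⟪x, p.1⟫) (⟪y, p.1⟫)}
          = {p : E × ℝ | min (⟪x, p.1⟫) (⟪y, p.1⟫) ≤ p.2}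
            ∩ {p : E × ℝ | p.2 ≤ max (⟪x, p.1⟫) (⟪y, p.1⟫)} := by
        ext p
        simp [Set.uIcc, Set.mem_Icc]
      rw [this]
      exact (measurableSet_le (hcx.min hcy).measurable measurable_snd).inter
        (measurableSet_le measurable_snd (hcx.max hcy).measurable)
    exact h1.inter h2
  rw [hset]
  rw [Measure.prod_apply hmeasS]
  have hsec : ∫⁻ u, volume (Prod.mk u ⁻¹' {p : E × ℝ |
        ‖p.1‖ = 1 ∧ p.2 ∈ Set.uIcc (⟪x, p.1⟫) (⟪y, p.1⟫)}) ∂σ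
      = ∫⁻ u, ENNReal.ofReal |⟪x - y, u⟫| ∂σ := by
    refine lintegral_congr_ae ?_
    filter_upwards [hsphae] with u hu
    have hu1 : ‖u‖ = 1 := mem_sphere_zero_iff_norm.1 hu
    have : Prod.mk u ⁻¹' {p : E × ℝ |
        ‖p.1‖ = 1 ∧ p.2 ∈ Set.uIcc (⟪x, p.1⟫) (⟪y, p.1⟫)}
        = Set.uIcc (⟪x, u⟫) (⟪y, u⟫) := by
      ext t
      show (‖u‖ = 1 ∧ t ∈ Set.uIcc ⟪x, u⟫ ⟪y, u⟫) ↔ _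
      simp [hu1]
    rw [this, Real.volume_interval]
    congr 1
    rw [inner_sub_left]
    rw [abs_sub_comm]
  rw [hsec, hscale (x - y)]
  rw [ENNReal.toReal_mul, ENNReal.toReal_ofReal (norm_nonneg _)]
  rw [dist_eq_norm]
  field_simp [ENNReal.toReal_ne_zero.2 ⟨hC0, hCfin⟩]
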